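/- Let α be a complex number with Re(α) ≠ 0. Writing ε_α for the continuous multiplicative automorphism of ℂ given by ε_α(r s) = r^α s for r > 0, s on the unit circle, and ε_α(0) = 0, the inverse of ε_α is ε_β with β = (1 − i·Im(α))/Re(α); that is, ε_β(ε_α(z)) = z for all z ∈ ℂ. -/

import Mathlib

/-- The continuous multiplicative automorphism `ε_α` of `ℂ`: for `z = rs` with
`r = |z| > 0` and `s = z/|z|` on the unit circle, `ε_α(z) = r^α s`; `ε_α(0) = 0`. -/
noncomputable def cEps (α : ℂ) (z : ℂ) : ℂ :=
  if z = 0 then 0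
  else Complex.exp (α * (Real.log ‖z‖ : ℂ)) * (z / (‖z‖ : ℂ))

/-- The inverse of `ε_α` (for `Re α ≠ 0`) is `ε_β` with `β = (1 − i·Im α)/Re α`. -/
theorem cEps_inverse (α : ℂ) (hα : α.re ≠ 0) (z : ℂ) :
    cEps ((1 - Complex.I * (α.im : ℂ)) / (α.re : ℂ)) (cEps α z) = z := by
  by_cases hz : z = 0
  · simp [cEps, hz]
  have hr : (0:ℝ) < ‖z‖ := norm_pos_iff.mpr hz
  set L := Real.log ‖z‖ with hL
  have habsne : (‖z‖ : ℂ) ≠ 0 := by exact_mod_cast hr.ne'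
  have hzr : z / (‖z‖ : ℂ) ≠ 0 := div_ne_zero hz habsne
  have hw : Complex.exp (α * L) * (z / (‖z‖ : ℂ)) ≠ 0 :=
    mul_ne_zero (Complex.exp_ne_zero _) hzr
  have habs : ‖Complex.exp (α * L) * (z / (‖z‖ : ℂ))‖
      = Real.exp (α.re * L) := by
    rw [norm_mul, Complex.norm_exp, norm_div, Complex.norm_real,
      norm_norm, div_self hr.ne']
    simp [Complex.mul_re]
  simp only [cEps, ← hL, if_neg hz, if_neg hw, habs, Real.log_exp]
  have hre : (α.re : ℂ) ≠ 0 := Complex.ofReal_ne_zero.mpr hα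
  have hsum : (1 - Complex.I * (α.im : ℂ)) / (α.re : ℂ) * ((α.re * L : ℝ) : ℂ)
      + α * L - ((α.re * L : ℝ) : ℂ) = (L : ℂ) := by
    have hα' : (α.re : ℂ) + (α.im : ℂ) * Complex.I = α := Complex.re_add_im α
    push_cast
    field_simp
    linear_combination (-1 : ℂ) * (L : ℂ) * hα'
  calc Complex.exp ((1 - Complex.I * (α.im : ℂ)) / (α.re : ℂ) * ((α.re * L : ℝ) : ℂ))
        * (Complex.exp (α * L) * (z / (‖z‖ : ℂ)) / ((Real.exp (α.re * L) : ℝ) : ℂ))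
      = Complex.exp ((1 - Complex.I * (α.im : ℂ)) / (α.re : ℂ) * ((α.re * L : ℝ) : ℂ)
          + α * L - ((α.re * L : ℝ) : ℂ)) * (z / (‖z‖ : ℂ)) := by
        rw [Complex.ofReal_exp, Complex.exp_sub, Complex.exp_add]
        ring
    _ = (‖z‖ : ℂ) * (z / (‖z‖ : ℂ)) := by
        rw [hsum, ← Complex.ofReal_exp, hL, Real.exp_log hr]
    _ = z := mul_div_cancel₀ z habsne
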